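/- Let μ > 1 and let z = (z₁, z₂) ∈ Ω̃. Then |z₁| = 2|φ̃₁(z)|^μ and ρ̃(z) = 4|φ̃₁(z)|^μ (|φ̃₁(z)|^μ - cos(log |φ̃₂(z)|²)). -/

import Mathlib

open MeasureTheory

/-- `log^t(z)`: the branch of the logarithm of `z` whose imaginary part lies in
`[log t², log t² + 2π)`. -/
noncomputable def logT (t : ℝ) (z : ℂ) : ℂ :=
  Complex.log z +
    ((2 * Real.pi * (⌈(Real.log (t ^ 2) - (Complex.log z).im) / (2 * Real.pi)⌉ : ℤ) : ℝ) : ℂ) *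
      Complex.I

/-- `ρ̃(z) = |z₁ + e^{i log|z₂|²}|² - 1`. -/
noncomputable def rhoT (z : ℂ × ℂ) : ℝ :=
  ‖z.1 + Complex.exp (Complex.I * (Real.log (‖z.2‖ ^ 2) : ℂ))‖ ^ 2 - 1

/-- `Ω̃ = {z ∈ ℂ × (ℂ∖{0}) : ρ̃(z) < 0}`. -/
def OmegaT : Set (ℂ × ℂ) := {z | z.2 ≠ 0 ∧ rhoT z < 0}

/-- `φ̃(z) = (exp((log^{|z₂|}(z₁) - log 2)/μ), z₂ exp(½(π + i log^{|z₂|}(z₁))))`. -/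
noncomputable def phiT (μ : ℝ) (z : ℂ × ℂ) : ℂ × ℂ :=
  (Complex.exp ((logT ‖z.2‖ z.1 - (Real.log 2 : ℂ)) / (μ : ℂ)),
   z.2 * Complex.exp (((Real.pi : ℂ) + Complex.I * logT ‖z.2‖ z.1) / 2))

/-- The Reinhardt domain
`D_μ = {w ∈ ℂ² : 0 < |w₁| < 1 and |log |w₂|²| < arccos(|w₁|^μ)}`. -/
def Dset (μ : ℝ) : Set (ℂ × ℂ) :=
  {w | 0 < ‖w.1‖ ∧ ‖w.1‖ < 1 ∧
    |Real.log (‖w.2‖ ^ 2)| < Real.arccos (‖w.1‖ ^ μ)}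

lemma exp_logT {t : ℝ} {z : ℂ} (hz : z ≠ 0) : Complex.exp (logT t z) = z := by
  set k : ℤ := ⌈(Real.log (t ^ 2) - (Complex.log z).im) / (2 * Real.pi)⌉ with hk
  rw [logT, ← hk, Complex.exp_add, Complex.exp_log hz,
    show ((2 * Real.pi * (k : ℝ) : ℝ) : ℂ) * Complex.I = (k : ℂ) * (2 * Real.pi * Complex.I) by
      push_cast; ring,
    Complex.exp_int_mul_two_pi_mul_I, mul_one]

theorem abs_z1_and_rho_in_terms_of_phiT (μ : ℝ) (hμ : 1 < μ) (z : ℂ × ℂ) (hz : z ∈ OmegaT) :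
    ‖z.1‖ = 2 * ‖(phiT μ z).1‖ ^ μ ∧
    rhoT z = 4 * ‖(phiT μ z).1‖ ^ μ *
      (‖(phiT μ z).1‖ ^ μ - Real.cos (Real.log (‖(phiT μ z).2‖ ^ 2))) := by
  obtain ⟨hz2, hρ⟩ := hz
  have hz1 : z.1 ≠ 0 := by
    intro h
    rw [rhoT, h, zero_add, Complex.norm_exp] at hρ
    simp [Complex.mul_re] at hρ
  set L := logT (‖z.2‖) z.1 with hLdef
  set θ := Real.log (‖z.2‖ ^ 2) with hθdef
  have hL : Complex.exp L = z.1 := exp_logT hz1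
  have hLre : L.re = Real.log (‖z.1‖) := by
    simp [hLdef, logT, Complex.log_re]
  have hμ0 : μ ≠ 0 := by positivity
  have habs1 : ‖(phiT μ z).1‖
      = Real.exp ((Real.log (‖z.1‖) - Real.log 2) / μ) := by
    rw [phiT, Complex.norm_exp, Complex.div_ofReal_re, Complex.sub_re, Complex.ofReal_re, hLre]
  have hA : ‖(phiT μ z).1‖ ^ μ = ‖z.1‖ / 2 := by
    rw [habs1, ← Real.exp_mul, div_mul_cancel₀ _ hμ0, Real.exp_sub,
      Real.exp_log ((norm_pos_iff.mpr hz1)), Real.exp_log two_pos]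
  have habspos : (0:ℝ) < ‖z.2‖ := (norm_pos_iff.mpr hz2)
  have hφ2 : Real.log (‖(phiT μ z).2‖ ^ 2) = θ + (Real.pi - L.im) := by
    have hre : (((Real.pi : ℂ) + Complex.I * L) / 2).re = (Real.pi - L.im) / 2 := by
      rw [show ((2:ℂ)) = ((2:ℝ):ℂ) by norm_num, Complex.div_ofReal_re]
      simp [Complex.add_re, Complex.mul_re]
      ring
    rw [phiT]
    rw [norm_mul, Complex.norm_exp, hre, mul_pow, sq (Real.exp _), ← Real.exp_add]
    rw [Real.log_mul (by positivity) (Real.exp_ne_zero _), Real.log_exp, hθdef]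
    ring
  have hcos : Real.cos (Real.log (‖(phiT μ z).2‖ ^ 2)) = -Real.cos (L.im - θ) := by
    rw [hφ2, show θ + (Real.pi - L.im) = Real.pi - (L.im - θ) by ring, Real.cos_pi_sub]
  have hrho : rhoT z = ‖z.1‖ ^ 2 + 2 * (‖z.1‖ * Real.cos (L.im - θ)) := by
    rw [rhoT, ← hθdef, Complex.sq_norm, Complex.normSq_add, ← Complex.sq_norm z.1]
    have h1 : Complex.normSq (Complex.exp (Complex.I * (θ : ℂ))) = 1 := by
      rw [← Complex.sq_norm, Complex.norm_exp]
      simp [Complex.mul_re]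
    have h2 : (z.1 * (starRingEnd ℂ) (Complex.exp (Complex.I * (θ : ℂ)))).re
        = ‖z.1‖ * Real.cos (L.im - θ) := by
      rw [← Complex.exp_conj, ← hL, ← Complex.exp_add, Complex.exp_re]
      have : (L + (starRingEnd ℂ) (Complex.I * (θ : ℂ))).re = L.re ∧
          (L + (starRingEnd ℂ) (Complex.I * (θ : ℂ))).im = L.im - θ := by
        constructor <;> simp [Complex.mul_re, Complex.mul_im] <;> ring
      rw [this.1, this.2, hLre, Real.exp_log ((norm_pos_iff.mpr hz1)), hL]
    rw [h1, h2]
    ring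
  constructor
  · rw [hA]; ring
  · rw [hrho, hA, hcos]; ring
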